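/- Let S be a unital ring, n ≥ 2, and R = Mₙ(S) the ring of n×n matrices over S. Then every Jordan homomorphism φ : R → R' into any ring R' is the sum of a homomorphism and an antihomomorphism on the whole ring R (taking I = R in the definition); in particular, φ is splittable. -/

import Mathlib

/-- An additive map `φ` between (possibly non-unital) associative rings is a
Jordan homomorphism if `φ(x²) = φ(x)²` and `φ(xyx) = φ(x)φ(y)φ(x)`. -/
def IsJordanHom {R R' : Type*} [NonUnitalRing R] [NonUnitalRing R'] (φ : R → R') : Prop :=
  (∀ x y : R, φ (x + y) = φ x + φ y) ∧
  (∀ x : R, φ (x * x) = φ x * φ x) ∧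
  (∀ x y : R, φ (x * y * x) = φ x * φ y * φ x)

/-- `R'_φ`: the (non-unital) subring of `R'` generated by the image of `φ`. -/
def rngGen {R R' : Type*} [NonUnitalRing R] [NonUnitalRing R'] (φ : R → R') :
    NonUnitalSubring R' :=
  NonUnitalSubring.closure (Set.range φ)

/-- `V_φ`: the two-sided ideal of `R'_φ` generated by all `{x,y} = φ(xy) − φ(x)φ(y)`. -/
def Vphi {R R' : Type*} [NonUnitalRing R] [NonUnitalRing R'] (φ : R → R') :
    TwoSidedIdeal (rngGen φ) :=
  TwoSidedIdeal.span {a : rngGen φ | ∃ x y : R, (a : R') = φ (x * y) - φ x * φ y}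

/-- `W_φ`: the two-sided ideal of `R'_φ` generated by all `⟨x,y⟩ = φ(xy) − φ(y)φ(x)`. -/
def Wphi {R R' : Type*} [NonUnitalRing R] [NonUnitalRing R'] (φ : R → R') :
    TwoSidedIdeal (rngGen φ) :=
  TwoSidedIdeal.span {a : rngGen φ | ∃ x y : R, (a : R') = φ (x * y) - φ y * φ x}

/-- `φ` is splittable if `V_φ ∩ W_φ = {0}`. -/
def Splittable {R R' : Type*} [NonUnitalRing R] [NonUnitalRing R'] (φ : R → R') : Prop :=
  Vphi φ ⊓ Wphi φ = ⊥

/-- The commutator ideal of `R`: the two-sided ideal generated by all `xy − yx`. -/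
def commutatorIdeal (R : Type*) [NonUnitalRing R] : TwoSidedIdeal R :=
  TwoSidedIdeal.span {z : R | ∃ x y : R, z = x * y - y * x}

/-- `φ` is the sum of the homomorphism `φ₁` and the antihomomorphism `φ₂` on the ideal
`I` of `R`; here `φ₁, φ₂ : R → R'_φ` are only constrained on `I`. -/
def IsSumHomAntihomWith {R R' : Type*} [NonUnitalRing R] [NonUnitalRing R']
    (φ : R → R') (I : TwoSidedIdeal R) (φ₁ φ₂ : R → rngGen φ) : Prop :=
  (∀ u ∈ I, ∀ v ∈ I, φ₁ (u + v) = φ₁ u + φ₁ v) ∧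
  (∀ u ∈ I, ∀ v ∈ I, φ₂ (u + v) = φ₂ u + φ₂ v) ∧
  (∀ u ∈ I, ∀ v ∈ I, φ₁ (u * v) = φ₁ u * φ₁ v) ∧
  (∀ u ∈ I, ∀ v ∈ I, φ₂ (u * v) = φ₂ v * φ₂ u) ∧
  (∀ u ∈ I, φ u = (φ₁ u : R') + (φ₂ u : R')) ∧
  (∃ J₁ J₂ : TwoSidedIdeal (rngGen φ),
    (∀ u ∈ I, φ₁ u ∈ J₁) ∧ (∀ u ∈ I, φ₂ u ∈ J₂) ∧ J₁ ⊓ J₂ = ⊥) ∧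
  (∀ u ∈ I, ∀ x : R, (φ₁ (u * x) : R') = (φ₁ u : R') * φ x ∧
      (φ₁ (x * u) : R') = φ x * (φ₁ u : R')) ∧
  (∀ u ∈ I, ∀ x : R, (φ₂ (u * x) : R') = φ x * (φ₂ u : R') ∧
      (φ₂ (x * u) : R') = (φ₂ u : R') * φ x)

/-- `φ` is the sum of a homomorphism and an antihomomorphism on the ideal `I` of `R`. -/
def IsSumHomAntihomOn {R R' : Type*} [NonUnitalRing R] [NonUnitalRing R']
    (φ : R → R') (I : TwoSidedIdeal R) : Prop :=
  ∃ φ₁ φ₂ : R → rngGen φ, IsSumHomAntihomWith φ I φ₁ φ₂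


namespace JRaux

variable {A : Type*} [NonUnitalRing A] {R' : Type*} [NonUnitalRing R'] {φ : A → R'}

lemma phi_zero (hadd : ∀ x y : A, φ (x + y) = φ x + φ y) : φ 0 = 0 := by
  have := hadd 0 0
  simpa using this.symm

lemma lin1 (hadd : ∀ x y : A, φ (x + y) = φ x + φ y)
    (hsq : ∀ x : A, φ (x * x) = φ x * φ x) (x y : A) :
    φ (x * y + y * x) = φ x * φ y + φ y * φ x := by
  have h := hsq (x + y)
  have e1 : (x + y) * (x + y) = x * x + (x * y + y * x) + y * y := by noncomm_ring
  have e2 : (φ x + φ y) * (φ x + φ y)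
      = φ x * φ x + (φ x * φ y + φ y * φ x) + φ y * φ y := by noncomm_ring
  rw [e1, hadd, hadd, hsq, hsq, hadd x y, e2] at h
  exact add_left_cancel (add_right_cancel h)

lemma lin2 (hadd : ∀ x y : A, φ (x + y) = φ x + φ y)
    (htr : ∀ x y : A, φ (x * y * x) = φ x * φ y * φ x) (x z y : A) :
    φ (x * z * y + y * z * x) = φ x * φ z * φ y + φ y * φ z * φ x := by
  have h := htr (x + y) z
  have e1 : (x + y) * z * (x + y) = x * z * x + (x * z * y + y * z * x) + y * z * y := by
    noncomm_ring
  have e2 : (φ x + φ y) * φ z * (φ x + φ y)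
      = φ x * φ z * φ x + (φ x * φ z * φ y + φ y * φ z * φ x) + φ y * φ z * φ y := by
    noncomm_ring
  rw [e1, hadd, hadd, htr, htr, hadd x y, e2] at h
  exact add_left_cancel (add_right_cancel h)


section matrices
variable {S : Type*} [Ring S] {n : ℕ}

/-- matrix units -/
def ME (S : Type*) [Ring S] {n : ℕ} (i j : Fin n) : Matrix (Fin n) (Fin n) S :=
  Matrix.single i j 1

lemma ME_mul_same (i j k : Fin n) : (ME S i j) * ME S j k = ME S i k := by
  simp [ME]

lemma ME_mul_ne {j k : Fin n} (h : j ≠ k) (i l : Fin n) : ME S i j * ME S k l = 0 := by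
  simp [ME]
  exact Matrix.single_mul_single_of_ne 1 i j k h 1

lemma ME_sum_diag : ∑ i, ME S i i = (1 : Matrix (Fin n) (Fin n) S) := by
  ext a b
  rw [Matrix.sum_apply]
  by_cases h : a = b
  · subst h
    rw [Finset.sum_eq_single a (fun c _ hc => by simp [ME, Matrix.single, hc]) (by simp)]
    simp [ME, Matrix.single]
  · rw [Finset.sum_eq_zero (fun c _ => ?_)]
    · simp [Matrix.one_apply, h]
    · simp only [ME, Matrix.single, Matrix.of_apply]
      rw [if_neg]
      rintro ⟨rfl, rfl⟩
      exact h rfl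

lemma ME_decomp (x : Matrix (Fin n) (Fin n) S) :
    x = ∑ i, ∑ j, ME S i i * x * ME S j j := by
  calc x = (∑ i, ME S i i) * x * (∑ j, ME S j j) := by
        rw [ME_sum_diag, one_mul, mul_one]
    _ = ∑ i, ∑ j, ME S i i * x * ME S j j := by
        rw [Finset.sum_mul, Finset.sum_mul]
        exact Finset.sum_congr rfl fun i _ => by rw [Finset.mul_sum]

end matrices


section core
variable {S : Type*} [Ring S] {n : ℕ} {R' : Type*} [NonUnitalRing R']
variable {φ : Matrix (Fin n) (Fin n) S → R'}

/-- `u` lies in the `(i,j)` Peirce corner of the matrix ring. -/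
def MP (S : Type*) [Ring S] {n : ℕ} (i j : Fin n) (u : Matrix (Fin n) (Fin n) S) : Prop :=
  ME S i i * u = u ∧ u * ME S j j = u

lemma MP_mk (i j : Fin n) (x : Matrix (Fin n) (Fin n) S) :
    MP S i j (ME S i i * x * ME S j j) :=
  ⟨by rw [← mul_assoc, ← mul_assoc, ME_mul_same], by rw [mul_assoc, ME_mul_same]⟩

lemma MP_ME (i j : Fin n) : MP S i j (ME S i j) :=
  ⟨ME_mul_same i i j, ME_mul_same i j j⟩

lemma MP_mul0 {i j k l : Fin n} {u v : Matrix (Fin n) (Fin n) S}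
    (hu : MP S i j u) (hv : MP S k l v) (hjk : j ≠ k) : u * v = 0 := by
  rw [← hu.2, ← hv.1, mul_assoc, ← mul_assoc (ME S j j), ME_mul_ne hjk, zero_mul, mul_zero]

lemma MP_mul {i j l : Fin n} {u v : Matrix (Fin n) (Fin n) S}
    (hu : MP S i j u) (hv : MP S j l v) : MP S i l (u * v) :=
  ⟨by rw [← mul_assoc, hu.1], by rw [mul_assoc, hv.2]⟩

/-- The image of the diagonal matrix unit. -/
def aE (φ : Matrix (Fin n) (Fin n) S → R') (i : Fin n) : R' := φ (ME S i i)

/-- `(i,j)` component of `φ u`. -/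
def AE (φ : Matrix (Fin n) (Fin n) S → R') (i j : Fin n)
    (u : Matrix (Fin n) (Fin n) S) : R' := aE φ i * φ u * aE φ j

lemma a_idem (hJ : IsJordanHom φ) (i : Fin n) : aE φ i * aE φ i = aE φ i := by
  have := hJ.2.1 (ME S i i)
  rw [ME_mul_same] at this
  exact this.symm

lemma a_orth (hJ : IsJordanHom φ) {i j : Fin n} (hij : i ≠ j) : aE φ i * aE φ j = 0 := by
  have h1 : aE φ i * aE φ j + aE φ j * aE φ i = 0 := by
    have := lin1 hJ.1 hJ.2.1 (ME S i i) (ME S j j)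
    rw [ME_mul_ne hij, ME_mul_ne (Ne.symm hij), add_zero, phi_zero hJ.1] at this
    exact this.symm
  have h2 : aE φ i * aE φ j * aE φ i = 0 := by
    have := hJ.2.2 (ME S i i) (ME S j j)
    rw [ME_mul_ne hij, zero_mul, phi_zero hJ.1] at this
    exact this.symm
  have h3 : aE φ i * aE φ j = -(aE φ j * aE φ i) := eq_neg_of_add_eq_zero_left h1
  calc aE φ i * aE φ j = aE φ i * aE φ i * aE φ j := by rw [a_idem hJ]
    _ = aE φ i * (aE φ i * aE φ j) := by rw [mul_assoc]
    _ = aE φ i * -(aE φ j * aE φ i) := by rw [← h3]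
    _ = -(aE φ i * aE φ j * aE φ i) := by rw [mul_neg, mul_assoc]
    _ = 0 := by rw [h2, neg_zero]

/-- Peirce corner on the `R'` side. -/
def RP (φ : Matrix (Fin n) (Fin n) S → R') (i j : Fin n) (w : R') : Prop :=
  aE φ i * w = w ∧ w * aE φ j = w

lemma RP_mul0 (hJ : IsJordanHom φ) {i j k l : Fin n} {w w' : R'}
    (hw : RP φ i j w) (hw' : RP φ k l w') (hjk : j ≠ k) : w * w' = 0 := by
  rw [← hw.2, ← hw'.1, mul_assoc, ← mul_assoc (aE φ j), a_orth hJ hjk, zero_mul, mul_zero]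

lemma RP_mul {i j l : Fin n} {w w' : R'}
    (hw : RP φ i j w) (hw' : RP φ j l w') : RP φ i l (w * w') :=
  ⟨by rw [← mul_assoc, hw.1], by rw [mul_assoc, hw'.2]⟩

lemma RP_l0 (hJ : IsJordanHom φ) {i j k : Fin n} {w : R'}
    (hw : RP φ i j w) (hki : k ≠ i) : aE φ k * w = 0 := by
  rw [← hw.1, ← mul_assoc, a_orth hJ hki, zero_mul]

lemma RP_r0 (hJ : IsJordanHom φ) {i j k : Fin n} {w : R'}
    (hw : RP φ i j w) (hjk : j ≠ k) : w * aE φ k = 0 := by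
  rw [← hw.2, mul_assoc, a_orth hJ hjk, mul_zero]

lemma RP_A (hJ : IsJordanHom φ) (i j : Fin n) (u : Matrix (Fin n) (Fin n) S) :
    RP φ i j (AE φ i j u) := by
  constructor
  · show aE φ i * (aE φ i * φ u * aE φ j) = aE φ i * φ u * aE φ j
    rw [← mul_assoc, ← mul_assoc, a_idem hJ]
  · show (aE φ i * φ u * aE φ j) * aE φ j = aE φ i * φ u * aE φ j
    rw [mul_assoc (aE φ i * φ u), a_idem hJ]

lemma diag_eq (hJ : IsJordanHom φ) {i : Fin n} {z : Matrix (Fin n) (Fin n) S}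
    (hz : MP S i i z) : φ z = aE φ i * φ z * aE φ i := by
  have := hJ.2.2 (ME S i i) z
  rw [show ME S i i * z * ME S i i = z by rw [hz.1, hz.2]] at this
  exact this

lemma RP_diag (hJ : IsJordanHom φ) {i : Fin n} {z : Matrix (Fin n) (Fin n) S}
    (hz : MP S i i z) : RP φ i i (φ z) := by
  constructor
  · conv_lhs => rw [diag_eq hJ hz]
    rw [← mul_assoc, ← mul_assoc, a_idem hJ, ← diag_eq hJ hz]
  · conv_lhs => rw [diag_eq hJ hz]
    rw [mul_assoc, a_idem hJ, ← diag_eq hJ hz]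

lemma phi_split (hJ : IsJordanHom φ) {i j : Fin n} (hij : i ≠ j)
    {u : Matrix (Fin n) (Fin n) S} (hu : MP S i j u) :
    φ u = AE φ i j u + AE φ j i u := by
  have h := lin2 hJ.1 hJ.2.2 (ME S i i) u (ME S j j)
  have e0 : ME S j j * u * ME S i i = 0 := by
    rw [← hu.1, ← mul_assoc, ME_mul_ne (Ne.symm hij), zero_mul, zero_mul]
  have e1 : ME S i i * u * ME S j j = u := by rw [hu.1, hu.2]
  rw [e0, e1, add_zero] at h
  exact h

end core


section core2
variable {S : Type*} [Ring S] {n : ℕ} {R' : Type*} [NonUnitalRing R']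
variable {φ : Matrix (Fin n) (Fin n) S → R'}

lemma RP_sand {i j : Fin n} {w : R'} (hw : RP φ i j w) :
    aE φ i * w * aE φ j = w := by rw [hw.1, hw.2]

lemma RP_sand0l (hJ : IsJordanHom φ) {i j k l : Fin n} {w : R'}
    (hw : RP φ i j w) (hki : k ≠ i) : aE φ k * w * aE φ l = 0 := by
  rw [RP_l0 hJ hw hki, zero_mul]

lemma RP_sand0r (hJ : IsJordanHom φ) {i j k l : Fin n} {w : R'}
    (hw : RP φ i j w) (hjl : j ≠ l) : aE φ k * w * aE φ l = 0 := by
  rw [mul_assoc, RP_r0 hJ hw hjl, mul_zero]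

lemma sand_add (i j : Fin n) (w1 w2 : R') :
    aE φ i * (w1 + w2) * aE φ j = aE φ i * w1 * aE φ j + aE φ i * w2 * aE φ j := by
  rw [mul_add, add_mul]

/- product expansions -/

lemma X1 (hJ : IsJordanHom φ) {i j l : Fin n} (hij : i ≠ j) (hjl : j ≠ l) (hil : i ≠ l)
    {u v : Matrix (Fin n) (Fin n) S} (hu : MP S i j u) (hv : MP S j l v) :
    φ u * φ v = AE φ i j u * AE φ j l v ∧ φ v * φ u = AE φ l j v * AE φ j i u := by
  constructor
  · rw [phi_split hJ hij hu, phi_split hJ hjl hv, add_mul, mul_add, mul_add]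
    rw [RP_mul0 hJ (RP_A hJ i j u) (RP_A hJ l j v) hjl,
        RP_mul0 hJ (RP_A hJ j i u) (RP_A hJ j l v) hij,
        RP_mul0 hJ (RP_A hJ j i u) (RP_A hJ l j v) hil]
    simp only [add_zero, zero_add]
  · rw [phi_split hJ hij hu, phi_split hJ hjl hv, add_mul, mul_add, mul_add]
    rw [RP_mul0 hJ (RP_A hJ j l v) (RP_A hJ i j u) (Ne.symm hil),
        RP_mul0 hJ (RP_A hJ j l v) (RP_A hJ j i u) (Ne.symm hjl),
        RP_mul0 hJ (RP_A hJ l j v) (RP_A hJ i j u) (Ne.symm hij)]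
    simp only [add_zero, zero_add]

lemma X2 (hJ : IsJordanHom φ) {i j : Fin n} (hij : i ≠ j)
    {u v : Matrix (Fin n) (Fin n) S} (hu : MP S i j u) (hv : MP S j i v) :
    φ u * φ v = AE φ i j u * AE φ j i v + AE φ j i u * AE φ i j v := by
  rw [phi_split hJ hij hu, phi_split hJ (Ne.symm hij) hv, add_mul, mul_add, mul_add]
  rw [RP_mul0 hJ (RP_A hJ i j u) (RP_A hJ i j v) (Ne.symm hij),
      RP_mul0 hJ (RP_A hJ j i u) (RP_A hJ j i v) hij]
  simp only [add_zero, zero_add]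

lemma X3 (hJ : IsJordanHom φ) {i j : Fin n} (hij : i ≠ j)
    {z u : Matrix (Fin n) (Fin n) S} (hz : MP S i i z) (hu : MP S i j u) :
    φ z * φ u = φ z * AE φ i j u ∧ φ u * φ z = AE φ j i u * φ z := by
  constructor
  · rw [phi_split hJ hij hu, mul_add,
      RP_mul0 hJ (RP_diag hJ hz) (RP_A hJ j i u) hij, add_zero]
  · rw [phi_split hJ hij hu, add_mul,
      RP_mul0 hJ (RP_A hJ i j u) (RP_diag hJ hz) (Ne.symm hij), zero_add]

lemma X4 (hJ : IsJordanHom φ) {i j : Fin n} (hij : i ≠ j)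
    {u z : Matrix (Fin n) (Fin n) S} (hu : MP S i j u) (hz : MP S j j z) :
    φ u * φ z = AE φ i j u * φ z ∧ φ z * φ u = φ z * AE φ j i u := by
  constructor
  · rw [phi_split hJ hij hu, add_mul,
      RP_mul0 hJ (RP_A hJ j i u) (RP_diag hJ hz) hij, add_zero]
  · rw [phi_split hJ hij hu, mul_add,
      RP_mul0 hJ (RP_diag hJ hz) (RP_A hJ i j u) (Ne.symm hij), zero_add]

/- structural product rules -/

lemma P1 (hJ : IsJordanHom φ) {i j k : Fin n} (hij : i ≠ j) (hjk : j ≠ k) (hik : i ≠ k)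
    {u v : Matrix (Fin n) (Fin n) S} (hu : MP S i j u) (hv : MP S j k v) :
    AE φ i k (u * v) = AE φ i j u * AE φ j k v ∧
      AE φ k i (u * v) = AE φ k j v * AE φ j i u := by
  have h := lin1 hJ.1 hJ.2.1 u v
  rw [MP_mul0 hv hu (Ne.symm hik), add_zero] at h
  rw [(X1 hJ hij hjk hik hu hv).1, (X1 hJ hij hjk hik hu hv).2] at h
  have h1 : RP φ i k (AE φ i j u * AE φ j k v) := RP_mul (RP_A hJ i j u) (RP_A hJ j k v)
  have h2 : RP φ k i (AE φ k j v * AE φ j i u) := RP_mul (RP_A hJ k j v) (RP_A hJ j i u)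
  constructor
  · show aE φ i * φ (u * v) * aE φ k = _
    rw [h, sand_add, RP_sand h1, RP_sand0l hJ h2 hik, add_zero]
  · show aE φ k * φ (u * v) * aE φ i = _
    rw [h, sand_add, RP_sand h2, RP_sand0l hJ h1 (Ne.symm hik), zero_add]

lemma P2 (hJ : IsJordanHom φ) {i j : Fin n} (hij : i ≠ j)
    {u v : Matrix (Fin n) (Fin n) S} (hu : MP S i j u) (hv : MP S j i v) :
    φ (u * v) = AE φ i j u * AE φ j i v + AE φ i j v * AE φ j i u := by
  have h := lin1 hJ.1 hJ.2.1 u v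
  rw [hJ.1, X2 hJ hij hu hv, X2 hJ (Ne.symm hij) hv hu] at h
  have hAA : RP φ i i (AE φ i j u * AE φ j i v) := RP_mul (RP_A hJ i j u) (RP_A hJ j i v)
  have hBB : RP φ j j (AE φ j i u * AE φ i j v) := RP_mul (RP_A hJ j i u) (RP_A hJ i j v)
  have hAA' : RP φ j j (AE φ j i v * AE φ i j u) := RP_mul (RP_A hJ j i v) (RP_A hJ i j u)
  have hBB' : RP φ i i (AE φ i j v * AE φ j i u) := RP_mul (RP_A hJ i j v) (RP_A hJ j i u)
  have hsand := congrArg (fun w => aE φ i * w * aE φ i) h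
  simp only [mul_add, add_mul] at hsand
  rw [RP_sand (RP_diag hJ (MP_mul hu hv)),
      RP_sand0l hJ (RP_diag hJ (MP_mul hv hu)) hij,
      RP_sand hAA, RP_sand0l hJ hBB hij, RP_sand0l hJ hAA' hij, RP_sand hBB'] at hsand
  simp only [add_zero, zero_add] at hsand
  exact hsand

lemma P3 (hJ : IsJordanHom φ) {i j : Fin n} (hij : i ≠ j)
    {z u : Matrix (Fin n) (Fin n) S} (hz : MP S i i z) (hu : MP S i j u) :
    AE φ i j (z * u) = φ z * AE φ i j u ∧ AE φ j i (z * u) = AE φ j i u * φ z := by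
  have h := lin1 hJ.1 hJ.2.1 z u
  rw [MP_mul0 hu hz (Ne.symm hij), add_zero, (X3 hJ hij hz hu).1, (X3 hJ hij hz hu).2] at h
  have h1 : RP φ i j (φ z * AE φ i j u) := RP_mul (RP_diag hJ hz) (RP_A hJ i j u)
  have h2 : RP φ j i (AE φ j i u * φ z) := RP_mul (RP_A hJ j i u) (RP_diag hJ hz)
  constructor
  · show aE φ i * φ (z * u) * aE φ j = _
    rw [h, sand_add, RP_sand h1, RP_sand0l hJ h2 hij, add_zero]
  · show aE φ j * φ (z * u) * aE φ i = _
    rw [h, sand_add, RP_sand h2, RP_sand0l hJ h1 (Ne.symm hij), zero_add]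

lemma P4 (hJ : IsJordanHom φ) {i j : Fin n} (hij : i ≠ j)
    {u z : Matrix (Fin n) (Fin n) S} (hu : MP S i j u) (hz : MP S j j z) :
    AE φ i j (u * z) = AE φ i j u * φ z ∧ AE φ j i (u * z) = φ z * AE φ j i u := by
  have h := lin1 hJ.1 hJ.2.1 u z
  rw [MP_mul0 hz hu (Ne.symm hij), add_zero, (X4 hJ hij hu hz).1, (X4 hJ hij hu hz).2] at h
  have h1 : RP φ i j (AE φ i j u * φ z) := RP_mul (RP_A hJ i j u) (RP_diag hJ hz)
  have h2 : RP φ j i (φ z * AE φ j i u) := RP_mul (RP_diag hJ hz) (RP_A hJ j i u)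
  constructor
  · show aE φ i * φ (u * z) * aE φ j = _
    rw [h, sand_add, RP_sand h1, RP_sand0l hJ h2 hij, add_zero]
  · show aE φ j * φ (u * z) * aE φ i = _
    rw [h, sand_add, RP_sand h2, RP_sand0l hJ h1 (Ne.symm hij), zero_add]

end core2


section core3
variable {S : Type*} [Ring S] {n : ℕ} {R' : Type*} [NonUnitalRing R']
variable {φ : Matrix (Fin n) (Fin n) S → R'}

lemma mid0 {R'' : Type*} [NonUnitalRing R''] {w x y v : R''} (h : x * y = 0) :
    (w * x) * (y * v) = 0 := by
  rw [mul_assoc w x, ← mul_assoc x, h, zero_mul, mul_zero]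

/-- hom component of `φ (ME i j)` -/
def xE (φ : Matrix (Fin n) (Fin n) S → R') (i j : Fin n) : R' := AE φ i j (ME S i j)

/-- antihom component of `φ (ME i j)` -/
def yE (φ : Matrix (Fin n) (Fin n) S → R') (i j : Fin n) : R' := AE φ j i (ME S i j)

lemma RP_x (hJ : IsJordanHom φ) (i j : Fin n) : RP φ i j (xE φ i j) := RP_A hJ i j _
lemma RP_y (hJ : IsJordanHom φ) (i j : Fin n) : RP φ j i (yE φ i j) := RP_A hJ j i _

lemma P5 (hJ : IsJordanHom φ) {i j : Fin n} (hij : i ≠ j) :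
    xE φ i j * yE φ i j = 0 ∧ yE φ i j * xE φ i j = 0 := by
  have fx : AE φ i j (ME S i j) = xE φ i j := rfl
  have fy : AE φ j i (ME S i j) = yE φ i j := rfl
  have h := hJ.2.1 (ME S i j)
  rw [ME_mul_ne (Ne.symm hij), phi_zero hJ.1, phi_split hJ hij (MP_ME i j), fx, fy] at h
  have k1 : xE φ i j * xE φ i j = 0 := RP_mul0 hJ (RP_x hJ i j) (RP_x hJ i j) (Ne.symm hij)
  have k2 : yE φ i j * yE φ i j = 0 := RP_mul0 hJ (RP_y hJ i j) (RP_y hJ i j) hij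
  rw [add_mul, mul_add, mul_add, k1, k2] at h
  simp only [zero_add, add_zero] at h
  have hxy : RP φ i i (xE φ i j * yE φ i j) := RP_mul (RP_x hJ i j) (RP_y hJ i j)
  have hyx : RP φ j j (yE φ i j * xE φ i j) := RP_mul (RP_y hJ i j) (RP_x hJ i j)
  constructor
  · have h2 := congrArg (fun w => aE φ i * w * aE φ i) h.symm
    simp only [mul_add, add_mul, mul_zero, zero_mul] at h2
    rwa [RP_sand hxy, RP_sand0l hJ hyx hij, add_zero] at h2
  · have h2 := congrArg (fun w => aE φ j * w * aE φ j) h.symm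
    simp only [mul_add, add_mul, mul_zero, zero_mul] at h2
    rwa [RP_sand hyx, RP_sand0l hJ hxy (Ne.symm hij), zero_add] at h2

lemma P6 (hJ : IsJordanHom φ) {i j : Fin n} (hij : i ≠ j) :
    xE φ i j * xE φ j i * xE φ i j = xE φ i j ∧
      yE φ i j * yE φ j i * yE φ i j = yE φ i j := by
  have fx : AE φ i j (ME S i j) = xE φ i j := rfl
  have fy : AE φ j i (ME S i j) = yE φ i j := rfl
  have fx' : AE φ j i (ME S j i) = xE φ j i := rfl
  have fy' : AE φ i j (ME S j i) = yE φ j i := rfl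
  have h := hJ.2.2 (ME S i j) (ME S j i)
  rw [ME_mul_same, ME_mul_same, phi_split hJ hij (MP_ME i j),
      phi_split hJ (Ne.symm hij) (MP_ME j i), fx, fy, fx', fy'] at h
  simp only [add_mul, mul_add] at h
  have k1 : xE φ i j * yE φ j i = 0 :=
    RP_mul0 hJ (RP_x hJ i j) (RP_y hJ j i) (Ne.symm hij)
  have k2 : yE φ i j * xE φ j i = 0 :=
    RP_mul0 hJ (RP_y hJ i j) (RP_x hJ j i) hij
  have e1 : xE φ i j * xE φ j i * yE φ i j = 0 :=
    RP_mul0 hJ (RP_mul (RP_x hJ i j) (RP_x hJ j i)) (RP_y hJ i j) hij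
  have e2 : yE φ i j * yE φ j i * xE φ i j = 0 :=
    RP_mul0 hJ (RP_mul (RP_y hJ i j) (RP_y hJ j i)) (RP_x hJ i j) (Ne.symm hij)
  rw [k1, k2, e1, e2] at h
  simp only [zero_mul, add_zero, zero_add] at h
  have hx3 : RP φ i j (xE φ i j * xE φ j i * xE φ i j) :=
    RP_mul (RP_mul (RP_x hJ i j) (RP_x hJ j i)) (RP_x hJ i j)
  have hy3 : RP φ j i (yE φ i j * yE φ j i * yE φ i j) :=
    RP_mul (RP_mul (RP_y hJ i j) (RP_y hJ j i)) (RP_y hJ i j)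
  constructor
  · have h2 := congrArg (fun w => aE φ i * w * aE φ j) h
    simp only [mul_add, add_mul] at h2
    rw [RP_sand (RP_x hJ i j), RP_sand0l hJ (RP_y hJ i j) hij,
      RP_sand hx3, RP_sand0l hJ hy3 hij, add_zero, add_zero] at h2
    exact h2.symm
  · have h2 := congrArg (fun w => aE φ j * w * aE φ i) h
    simp only [mul_add, add_mul] at h2
    rw [RP_sand (RP_y hJ i j), RP_sand0l hJ (RP_x hJ i j) (Ne.symm hij),
      RP_sand hy3, RP_sand0l hJ hx3 (Ne.symm hij), zero_add, zero_add] at h2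
    exact h2.symm

lemma xE_chain (hJ : IsJordanHom φ) {i j k : Fin n} (hij : i ≠ j) (hjk : j ≠ k) (hik : i ≠ k) :
    xE φ i j * xE φ j k = xE φ i k := by
  have := (P1 hJ hij hjk hik (MP_ME i j) (MP_ME j k)).1
  rw [ME_mul_same] at this
  exact this.symm

lemma yE_chain (hJ : IsJordanHom φ) {i j k : Fin n} (hij : i ≠ j) (hjk : j ≠ k) (hik : i ≠ k) :
    yE φ j k * yE φ i j = yE φ i k := by
  have := (P1 hJ hij hjk hik (MP_ME i j) (MP_ME j k)).2
  rw [ME_mul_same] at this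
  exact this.symm

/-- the local homomorphism idempotent at `i` with partner `j` -/
def pE (φ : Matrix (Fin n) (Fin n) S → R') (i j : Fin n) : R' := xE φ i j * xE φ j i

/-- the local antihomomorphism idempotent at `i` with partner `j` -/
def qE (φ : Matrix (Fin n) (Fin n) S → R') (i j : Fin n) : R' := yE φ j i * yE φ i j

lemma RP_p (hJ : IsJordanHom φ) (i j : Fin n) : RP φ i i (pE φ i j) :=
  RP_mul (RP_x hJ i j) (RP_x hJ j i)

lemma RP_q (hJ : IsJordanHom φ) (i j : Fin n) : RP φ i i (qE φ i j) :=
  RP_mul (RP_y hJ j i) (RP_y hJ i j)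

lemma pE_welldef (hJ : IsJordanHom φ) {i j k : Fin n} (hij : i ≠ j) (hik : i ≠ k) :
    pE φ i j = pE φ i k := by
  by_cases hjk : j = k
  · rw [hjk]
  · show xE φ i j * xE φ j i = xE φ i k * xE φ k i
    have e1 : xE φ i j = xE φ i k * xE φ k j :=
      (xE_chain hJ hik (Ne.symm hjk) hij).symm
    have e2 : xE φ j i = xE φ j k * xE φ k i :=
      (xE_chain hJ hjk (Ne.symm hik) (Ne.symm hij)).symm
    rw [e1, e2, mul_assoc]
    congr 1
    rw [xE_chain hJ hjk (Ne.symm hik) (Ne.symm hij),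
      xE_chain hJ (Ne.symm hjk) (Ne.symm hij) (Ne.symm hik)]

lemma qE_welldef (hJ : IsJordanHom φ) {i j k : Fin n} (hij : i ≠ j) (hik : i ≠ k) :
    qE φ i j = qE φ i k := by
  by_cases hjk : j = k
  · rw [hjk]
  · show yE φ j i * yE φ i j = yE φ k i * yE φ i k
    have e1 : yE φ j i = yE φ k i * yE φ j k :=
      (yE_chain hJ hjk (Ne.symm hik) (Ne.symm hij)).symm
    have e2 : yE φ i j = yE φ k j * yE φ i k :=
      (yE_chain hJ hik (Ne.symm hjk) hij).symm
    rw [e1, e2, mul_assoc]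
    congr 1
    rw [yE_chain hJ hik (Ne.symm hjk) hij, yE_chain hJ hij hjk hik]

lemma paq (hJ : IsJordanHom φ) {i j : Fin n} (hij : i ≠ j) :
    aE φ i = pE φ i j + qE φ i j := by
  have h := P2 hJ hij (MP_ME i j) (MP_ME j i)
  rw [ME_mul_same] at h
  exact h

end core3


section core4
variable {S : Type*} [Ring S] {n : ℕ} {R' : Type*} [NonUnitalRing R']
variable {φ : Matrix (Fin n) (Fin n) S → R'}

lemma pE_idem (hJ : IsJordanHom φ) {i j : Fin n} (hij : i ≠ j) :
    pE φ i j * pE φ i j = pE φ i j := by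
  show (xE φ i j * xE φ j i) * (xE φ i j * xE φ j i) = xE φ i j * xE φ j i
  rw [← mul_assoc, (P6 hJ hij).1]

lemma qE_idem (hJ : IsJordanHom φ) {i j : Fin n} (hij : i ≠ j) :
    qE φ i j * qE φ i j = qE φ i j := by
  show (yE φ j i * yE φ i j) * (yE φ j i * yE φ i j) = yE φ j i * yE φ i j
  rw [← mul_assoc, (P6 hJ (Ne.symm hij)).2]

lemma pE_qE (hJ : IsJordanHom φ) {i j : Fin n} (hij : i ≠ j) :
    pE φ i j * qE φ i j = 0 :=
  mid0 (P5 hJ (Ne.symm hij)).1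

lemma qE_pE (hJ : IsJordanHom φ) {i j : Fin n} (hij : i ≠ j) :
    qE φ i j * pE φ i j = 0 :=
  mid0 (P5 hJ hij).2

lemma K1 (hJ : IsJordanHom φ) {i j : Fin n} (hij : i ≠ j)
    {z : Matrix (Fin n) (Fin n) S} (hz : MP S i i z) :
    φ z * pE φ i j = pE φ i j * φ z := by
  have hw : MP S j i (ME S j i * z) := MP_mul (MP_ME j i) hz
  have s1 : AE φ j i (ME S j i * z) = xE φ j i * φ z := (P4 hJ (Ne.symm hij) (MP_ME j i) hz).1
  have s2 : AE φ i j (ME S j i * z) = φ z * yE φ j i := (P4 hJ (Ne.symm hij) (MP_ME j i) hz).2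
  have s3 : φ (ME S i j * (ME S j i * z)) =
      xE φ i j * AE φ j i (ME S j i * z) + AE φ i j (ME S j i * z) * yE φ i j :=
    P2 hJ hij (MP_ME i j) hw
  have s4 : ME S i j * (ME S j i * z) = z := by rw [← mul_assoc, ME_mul_same, hz.1]
  rw [s4, s1, s2] at s3
  have s5 : φ z = pE φ i j * φ z + φ z * qE φ i j := by
    conv_lhs => rw [s3]
    simp only [pE, qE, mul_assoc]
  have s6 : φ z = φ z * pE φ i j + φ z * qE φ i j := by
    conv_lhs => rw [← (RP_diag hJ hz).2, paq hJ hij, mul_add]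
  exact (add_right_cancel (s5.symm.trans s6)).symm

lemma K1q (hJ : IsJordanHom φ) {i j : Fin n} (hij : i ≠ j)
    {z : Matrix (Fin n) (Fin n) S} (hz : MP S i i z) :
    φ z * qE φ i j = qE φ i j * φ z := by
  have hq : qE φ i j = aE φ i - pE φ i j := by rw [paq hJ hij]; abel
  rw [hq, mul_sub, sub_mul, (RP_diag hJ hz).1, (RP_diag hJ hz).2, K1 hJ hij hz]

lemma rep_r (hJ : IsJordanHom φ) {i j : Fin n} (hij : i ≠ j)
    {u : Matrix (Fin n) (Fin n) S} (hu : MP S i j u) :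
    AE φ i j u = xE φ i j * φ (ME S j i * u) ∧
      AE φ j i u = φ (ME S j i * u) * yE φ i j := by
  have hz : MP S j j (ME S j i * u) := MP_mul (MP_ME j i) hu
  have hme : ME S i j * (ME S j i * u) = u := by rw [← mul_assoc, ME_mul_same, hu.1]
  constructor
  · conv_lhs => rw [← hme]
    exact (P4 hJ hij (MP_ME i j) hz).1
  · conv_lhs => rw [← hme]
    exact (P4 hJ hij (MP_ME i j) hz).2

lemma rep_l (hJ : IsJordanHom φ) {i j : Fin n} (hij : i ≠ j)
    {u : Matrix (Fin n) (Fin n) S} (hu : MP S i j u) :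
    AE φ i j u = φ (u * ME S j i) * xE φ i j ∧
      AE φ j i u = yE φ i j * φ (u * ME S j i) := by
  have hz : MP S i i (u * ME S j i) := MP_mul hu (MP_ME j i)
  have hme : (u * ME S j i) * ME S i j = u := by rw [mul_assoc, ME_mul_same, hu.2]
  constructor
  · conv_lhs => rw [← hme]
    exact (P3 hJ hij hz (MP_ME i j)).1
  · conv_lhs => rw [← hme]
    exact (P3 hJ hij hz (MP_ME i j)).2

lemma K2a (hJ : IsJordanHom φ) {i j : Fin n} (hij : i ≠ j)
    {u : Matrix (Fin n) (Fin n) S} (hu : MP S i j u) :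
    qE φ i j * AE φ i j u = 0 := by
  rw [(rep_r hJ hij hu).1]
  exact mid0 (P5 hJ hij).2

lemma K2b (hJ : IsJordanHom φ) {i j : Fin n} (hij : i ≠ j)
    {u : Matrix (Fin n) (Fin n) S} (hu : MP S i j u) :
    AE φ i j u * qE φ j i = 0 := by
  rw [(rep_l hJ hij hu).1]
  exact mid0 (P5 hJ hij).1

lemma K2c (hJ : IsJordanHom φ) {i j : Fin n} (hij : i ≠ j)
    {u : Matrix (Fin n) (Fin n) S} (hu : MP S i j u) :
    pE φ j i * AE φ j i u = 0 := by
  have hz : MP S j j (ME S j i * u) := MP_mul (MP_ME j i) hu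
  have hpy : pE φ j i * yE φ i j = 0 := by
    show xE φ j i * xE φ i j * yE φ i j = 0
    rw [mul_assoc, (P5 hJ hij).1, mul_zero]
  rw [(rep_r hJ hij hu).2, ← mul_assoc, ← K1 hJ (Ne.symm hij) hz, mul_assoc, hpy, mul_zero]

lemma K2d (hJ : IsJordanHom φ) {i j : Fin n} (hij : i ≠ j)
    {u : Matrix (Fin n) (Fin n) S} (hu : MP S i j u) :
    AE φ j i u * pE φ i j = 0 := by
  have hz : MP S i i (u * ME S j i) := MP_mul hu (MP_ME j i)
  have hyp : yE φ i j * pE φ i j = 0 := by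
    show yE φ i j * (xE φ i j * xE φ j i) = 0
    rw [← mul_assoc, (P5 hJ hij).2, zero_mul]
  rw [(rep_l hJ hij hu).2, mul_assoc, K1 hJ hij hz, ← mul_assoc, hyp, zero_mul]

lemma K2a' (hJ : IsJordanHom φ) {i j : Fin n} (hij : i ≠ j)
    (u : Matrix (Fin n) (Fin n) S) (hu : MP S i j u) :
    pE φ i j * AE φ i j u = AE φ i j u := by
  have h := (RP_A hJ i j u).1
  rw [paq hJ hij, add_mul, K2a hJ hij hu, add_zero] at h
  exact h

lemma K2b' (hJ : IsJordanHom φ) {i j : Fin n} (hij : i ≠ j)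
    (u : Matrix (Fin n) (Fin n) S) (hu : MP S i j u) :
    AE φ i j u * pE φ j i = AE φ i j u := by
  have h := (RP_A hJ i j u).2
  rw [paq hJ (Ne.symm hij), mul_add, K2b hJ hij hu, add_zero] at h
  exact h

lemma K2c' (hJ : IsJordanHom φ) {i j : Fin n} (hij : i ≠ j)
    (u : Matrix (Fin n) (Fin n) S) (hu : MP S i j u) :
    qE φ j i * AE φ j i u = AE φ j i u := by
  have h := (RP_A hJ j i u).1
  rw [paq hJ (Ne.symm hij), add_mul, K2c hJ hij hu, zero_add] at h
  exact h

lemma K2d' (hJ : IsJordanHom φ) {i j : Fin n} (hij : i ≠ j)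
    (u : Matrix (Fin n) (Fin n) S) (hu : MP S i j u) :
    AE φ j i u * qE φ i j = AE φ j i u := by
  have h := (RP_A hJ j i u).2
  rw [paq hJ hij, mul_add, K2d hJ hij hu, zero_add] at h
  exact h

end core4


section core5
variable {S : Type*} [Ring S] {n : ℕ} {R' : Type*} [NonUnitalRing R']
variable {φ : Matrix (Fin n) (Fin n) S → R'}

/-- a partner choice function -/
def sig (hn : 2 ≤ n) (i : Fin n) : Fin n :=
  if i = (⟨0, by omega⟩ : Fin n) then ⟨1, by omega⟩ else ⟨0, by omega⟩

lemma sig_ne (hn : 2 ≤ n) (i : Fin n) : i ≠ sig hn i := by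
  unfold sig
  by_cases h : i = (⟨0, by omega⟩ : Fin n)
  · rw [if_pos h, h]
    intro hc
    exact absurd (congrArg Fin.val hc) (by simp)
  · rw [if_neg h]
    exact h

/-- the global homomorphism idempotent -/
def pg (φ : Matrix (Fin n) (Fin n) S → R') (hn : 2 ≤ n) : R' := ∑ i, pE φ i (sig hn i)

/-- the global antihomomorphism idempotent -/
def qg (φ : Matrix (Fin n) (Fin n) S → R') (hn : 2 ≤ n) : R' := ∑ i, qE φ i (sig hn i)

lemma phi_sum (hadd : ∀ x y : Matrix (Fin n) (Fin n) S, φ (x + y) = φ x + φ y)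
    {ι : Type*} (s : Finset ι) (f : ι → Matrix (Fin n) (Fin n) S) :
    φ (∑ i ∈ s, f i) = ∑ i ∈ s, φ (f i) :=
  map_sum (AddMonoidHom.mk' φ hadd) f s

lemma unit_l (hJ : IsJordanHom φ) (x : Matrix (Fin n) (Fin n) S) : φ 1 * φ x = φ x := by
  have ha : φ 1 * φ 1 = φ 1 := by
    have := hJ.2.1 1
    rw [one_mul] at this
    exact this.symm
  have h1 : φ x = φ 1 * φ x * φ 1 := by
    have := hJ.2.2 1 x
    rwa [one_mul, mul_one] at this
  have h2 : φ x + φ x = φ x * φ 1 + φ 1 * φ x := by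
    have := lin1 hJ.1 hJ.2.1 x 1
    rw [mul_one, one_mul, hJ.1] at this
    exact this
  have h3 := congrArg (fun w => φ 1 * w) h2
  simp only [mul_add] at h3
  rw [← mul_assoc, ← mul_assoc, ha, ← h1] at h3
  exact add_right_cancel h3

lemma unit_r (hJ : IsJordanHom φ) (x : Matrix (Fin n) (Fin n) S) : φ x * φ 1 = φ x := by
  have ha : φ 1 * φ 1 = φ 1 := by
    have := hJ.2.1 1
    rw [one_mul] at this
    exact this.symm
  have h1 : φ x = φ 1 * φ x * φ 1 := by
    have := hJ.2.2 1 x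
    rwa [one_mul, mul_one] at this
  have h2 : φ x + φ x = φ x * φ 1 + φ 1 * φ x := by
    have := lin1 hJ.1 hJ.2.1 x 1
    rw [mul_one, one_mul, hJ.1] at this
    exact this
  have h3 := congrArg (fun w => w * φ 1) h2
  simp only [add_mul] at h3
  rw [mul_assoc, ha, ← h1] at h3
  exact add_left_cancel h3

lemma Gsum (hJ : IsJordanHom φ) (hn : 2 ≤ n) : pg φ hn + qg φ hn = φ 1 := by
  rw [pg, qg, ← Finset.sum_add_distrib]
  have : ∀ i : Fin n, pE φ i (sig hn i) + qE φ i (sig hn i) = aE φ i :=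
    fun i => (paq hJ (sig_ne hn i)).symm
  rw [Finset.sum_congr rfl (fun i _ => this i)]
  rw [show ∑ i, aE φ i = φ (∑ i, ME S i i) from (phi_sum hJ.1 _ _).symm, ME_sum_diag]

lemma Cp_off (hJ : IsJordanHom φ) (hn : 2 ≤ n) {i j : Fin n} (hij : i ≠ j)
    {u : Matrix (Fin n) (Fin n) S} (hu : MP S i j u) :
    φ u * pg φ hn = AE φ i j u ∧ pg φ hn * φ u = AE φ i j u := by
  constructor
  · rw [pg, Finset.mul_sum]
    rw [Finset.sum_eq_single j (fun k _ hkj => ?_) (by simp)]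
    · rw [pE_welldef hJ (sig_ne hn j) (Ne.symm hij), phi_split hJ hij hu, add_mul,
        K2b' hJ hij u hu, RP_mul0 hJ (RP_A hJ j i u) (RP_p hJ j i) hij, add_zero]
    · by_cases hki : k = i
      · subst hki
        rw [pE_welldef hJ (sig_ne hn k) hij, phi_split hJ hij hu, add_mul,
          RP_mul0 hJ (RP_A hJ k j u) (RP_p hJ k j) (Ne.symm hij), K2d hJ hij hu, add_zero]
      · rw [phi_split hJ hij hu, add_mul,
          RP_mul0 hJ (RP_A hJ i j u) (RP_p hJ k _) (Ne.symm hkj),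
          RP_mul0 hJ (RP_A hJ j i u) (RP_p hJ k _) (Ne.symm hki), add_zero]
  · rw [pg, Finset.sum_mul]
    rw [Finset.sum_eq_single i (fun k _ hki => ?_) (by simp)]
    · rw [pE_welldef hJ (sig_ne hn i) hij, phi_split hJ hij hu, mul_add,
        K2a' hJ hij u hu, RP_mul0 hJ (RP_p hJ i j) (RP_A hJ j i u) hij, add_zero]
    · by_cases hkj : k = j
      · subst hkj
        rw [pE_welldef hJ (sig_ne hn k) (Ne.symm hij), phi_split hJ hij hu, mul_add,
          RP_mul0 hJ (RP_p hJ k i) (RP_A hJ i k u) (Ne.symm hij), K2c hJ hij hu, add_zero]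
      · rw [phi_split hJ hij hu, mul_add,
          RP_mul0 hJ (RP_p hJ k _) (RP_A hJ i j u) hki,
          RP_mul0 hJ (RP_p hJ k _) (RP_A hJ j i u) hkj, add_zero]

lemma Cq_off (hJ : IsJordanHom φ) (hn : 2 ≤ n) {i j : Fin n} (hij : i ≠ j)
    {u : Matrix (Fin n) (Fin n) S} (hu : MP S i j u) :
    φ u * qg φ hn = AE φ j i u ∧ qg φ hn * φ u = AE φ j i u := by
  constructor
  · rw [qg, Finset.mul_sum]
    rw [Finset.sum_eq_single i (fun k _ hki => ?_) (by simp)]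
    · rw [qE_welldef hJ (sig_ne hn i) hij, phi_split hJ hij hu, add_mul,
        RP_mul0 hJ (RP_A hJ i j u) (RP_q hJ i j) (Ne.symm hij), K2d' hJ hij u hu, zero_add]
    · by_cases hkj : k = j
      · subst hkj
        rw [qE_welldef hJ (sig_ne hn k) (Ne.symm hij), phi_split hJ hij hu, add_mul,
          K2b hJ hij hu, RP_mul0 hJ (RP_A hJ k i u) (RP_q hJ k i) hij, add_zero]
      · rw [phi_split hJ hij hu, add_mul,
          RP_mul0 hJ (RP_A hJ i j u) (RP_q hJ k _) (Ne.symm hkj),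
          RP_mul0 hJ (RP_A hJ j i u) (RP_q hJ k _) (Ne.symm hki), add_zero]
  · rw [qg, Finset.sum_mul]
    rw [Finset.sum_eq_single j (fun k _ hkj => ?_) (by simp)]
    · rw [qE_welldef hJ (sig_ne hn j) (Ne.symm hij), phi_split hJ hij hu, mul_add,
        RP_mul0 hJ (RP_q hJ j i) (RP_A hJ i j u) (Ne.symm hij), K2c' hJ hij u hu, zero_add]
    · by_cases hki : k = i
      · subst hki
        rw [qE_welldef hJ (sig_ne hn k) hij, phi_split hJ hij hu, mul_add,
          K2a hJ hij hu, RP_mul0 hJ (RP_q hJ k j) (RP_A hJ j k u) hij, add_zero]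
      · rw [phi_split hJ hij hu, mul_add,
          RP_mul0 hJ (RP_q hJ k _) (RP_A hJ i j u) hki,
          RP_mul0 hJ (RP_q hJ k _) (RP_A hJ j i u) hkj, add_zero]

lemma Cp_diag (hJ : IsJordanHom φ) (hn : 2 ≤ n) {i : Fin n}
    {z : Matrix (Fin n) (Fin n) S} (hz : MP S i i z) :
    φ z * pg φ hn = φ z * pE φ i (sig hn i) ∧
      pg φ hn * φ z = pE φ i (sig hn i) * φ z := by
  constructor
  · rw [pg, Finset.mul_sum]
    rw [Finset.sum_eq_single i (fun k _ hki => ?_) (by simp)]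
    exact RP_mul0 hJ (RP_diag hJ hz) (RP_p hJ k _) (Ne.symm hki)
  · rw [pg, Finset.sum_mul]
    rw [Finset.sum_eq_single i (fun k _ hki => ?_) (by simp)]
    exact RP_mul0 hJ (RP_p hJ k _) (RP_diag hJ hz) hki

lemma Cq_diag (hJ : IsJordanHom φ) (hn : 2 ≤ n) {i : Fin n}
    {z : Matrix (Fin n) (Fin n) S} (hz : MP S i i z) :
    φ z * qg φ hn = φ z * qE φ i (sig hn i) ∧
      qg φ hn * φ z = qE φ i (sig hn i) * φ z := by
  constructor
  · rw [qg, Finset.mul_sum]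
    rw [Finset.sum_eq_single i (fun k _ hki => ?_) (by simp)]
    exact RP_mul0 hJ (RP_diag hJ hz) (RP_q hJ k _) (Ne.symm hki)
  · rw [qg, Finset.sum_mul]
    rw [Finset.sum_eq_single i (fun k _ hki => ?_) (by simp)]
    exact RP_mul0 hJ (RP_q hJ k _) (RP_diag hJ hz) hki

end core5


section core6
variable {S : Type*} [Ring S] {n : ℕ} {R' : Type*} [NonUnitalRing R']
variable {φ : Matrix (Fin n) (Fin n) S → R'}

lemma comm_term (hJ : IsJordanHom φ) (hn : 2 ≤ n) {i j : Fin n}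
    {u : Matrix (Fin n) (Fin n) S} (hu : MP S i j u) :
    φ u * pg φ hn = pg φ hn * φ u := by
  by_cases hij : i = j
  · subst hij
    rw [(Cp_diag hJ hn hu).1, (Cp_diag hJ hn hu).2, K1 hJ (sig_ne hn i) hu]
  · rw [(Cp_off hJ hn hij hu).1, (Cp_off hJ hn hij hu).2]

lemma comm_termq (hJ : IsJordanHom φ) (hn : 2 ≤ n) {i j : Fin n}
    {u : Matrix (Fin n) (Fin n) S} (hu : MP S i j u) :
    φ u * qg φ hn = qg φ hn * φ u := by
  by_cases hij : i = j
  · subst hij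
    rw [(Cq_diag hJ hn hu).1, (Cq_diag hJ hn hu).2, K1q hJ (sig_ne hn i) hu]
  · rw [(Cq_off hJ hn hij hu).1, (Cq_off hJ hn hij hu).2]

lemma comm_all (hJ : IsJordanHom φ) (hn : 2 ≤ n) (x : Matrix (Fin n) (Fin n) S) :
    φ x * pg φ hn = pg φ hn * φ x := by
  have hx := ME_decomp (S := S) x
  conv_lhs => rw [hx]
  conv_rhs => rw [hx]
  simp only [phi_sum hJ.1]
  simp only [Finset.sum_mul]
  simp only [Finset.mul_sum]
  exact Finset.sum_congr rfl fun i _ => Finset.sum_congr rfl fun j _ =>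
    comm_term hJ hn (MP_mk i j x)

lemma comm_allq (hJ : IsJordanHom φ) (hn : 2 ≤ n) (x : Matrix (Fin n) (Fin n) S) :
    φ x * qg φ hn = qg φ hn * φ x := by
  have hx := ME_decomp (S := S) x
  conv_lhs => rw [hx]
  conv_rhs => rw [hx]
  simp only [phi_sum hJ.1]
  simp only [Finset.sum_mul]
  simp only [Finset.mul_sum]
  exact Finset.sum_congr rfl fun i _ => Finset.sum_congr rfl fun j _ =>
    comm_termq hJ hn (MP_mk i j x)

lemma pg_idem (hJ : IsJordanHom φ) (hn : 2 ≤ n) : pg φ hn * pg φ hn = pg φ hn := by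
  rw [pg, Finset.sum_mul_sum]
  refine Finset.sum_congr rfl fun k _ => ?_
  rw [Finset.sum_eq_single k
    (fun l _ hlk => RP_mul0 hJ (RP_p hJ k _) (RP_p hJ l _) (Ne.symm hlk)) (by simp)]
  exact pE_idem hJ (sig_ne hn k)

lemma qg_idem (hJ : IsJordanHom φ) (hn : 2 ≤ n) : qg φ hn * qg φ hn = qg φ hn := by
  rw [qg, Finset.sum_mul_sum]
  refine Finset.sum_congr rfl fun k _ => ?_
  rw [Finset.sum_eq_single k
    (fun l _ hlk => RP_mul0 hJ (RP_q hJ k _) (RP_q hJ l _) (Ne.symm hlk)) (by simp)]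
  exact qE_idem hJ (sig_ne hn k)

lemma pg_qg (hJ : IsJordanHom φ) (hn : 2 ≤ n) : pg φ hn * qg φ hn = 0 := by
  rw [pg, qg, Finset.sum_mul_sum]
  refine Finset.sum_eq_zero fun k _ => Finset.sum_eq_zero fun l _ => ?_
  by_cases hkl : k = l
  · subst hkl
    exact pE_qE hJ (sig_ne hn k)
  · exact RP_mul0 hJ (RP_p hJ k _) (RP_q hJ l _) hkl

lemma qg_pg (hJ : IsJordanHom φ) (hn : 2 ≤ n) : qg φ hn * pg φ hn = 0 := by
  rw [pg, qg, Finset.sum_mul_sum]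
  refine Finset.sum_eq_zero fun k _ => Finset.sum_eq_zero fun l _ => ?_
  by_cases hkl : k = l
  · subst hkl
    exact qE_pE hJ (sig_ne hn k)
  · exact RP_mul0 hJ (RP_q hJ k _) (RP_p hJ l _) hkl

lemma K3 (hJ : IsJordanHom φ) {i k : Fin n} (hik : i ≠ k)
    {z z' : Matrix (Fin n) (Fin n) S} (hz : MP S i i z) (hz' : MP S i i z') :
    φ (z * z') * pE φ i k = φ z * (φ z' * pE φ i k) := by
  have fx : AE φ i k (ME S i k) = xE φ i k := rfl
  have key : φ (z * z') * xE φ i k = φ z * (φ z' * xE φ i k) := by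
    rw [← fx, ← (P3 hJ hik hz' (MP_ME i k)).1, ← (P3 hJ hik hz (MP_mul hz' (MP_ME i k))).1,
      ← (P3 hJ hik (MP_mul hz hz') (MP_ME i k)).1, mul_assoc]
  show φ (z * z') * (xE φ i k * xE φ k i) = φ z * (φ z' * (xE φ i k * xE φ k i))
  rw [← mul_assoc, key, mul_assoc, mul_assoc]

lemma K3q (hJ : IsJordanHom φ) {i k : Fin n} (hik : i ≠ k)
    {z z' : Matrix (Fin n) (Fin n) S} (hz : MP S i i z) (hz' : MP S i i z') :
    φ (z * z') * qE φ i k = φ z' * (φ z * qE φ i k) := by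
  have base : ∀ w : Matrix (Fin n) (Fin n) S, MP S i i w →
      yE φ i k * φ w = AE φ k i (w * ME S i k) := by
    intro w hw
    have := (P3 hJ hik hw (MP_ME i k)).2
    exact this.symm
  have key : yE φ i k * φ (z * z') = (yE φ i k * φ z') * φ z := by
    rw [base _ (MP_mul hz hz'), mul_assoc,
      (P3 hJ hik hz (MP_mul hz' (MP_ME i k))).2, ← base _ hz']
  rw [K1q hJ hik (MP_mul hz hz')]
  show (yE φ k i * yE φ i k) * φ (z * z') = _
  rw [mul_assoc, key, ← mul_assoc, ← mul_assoc]
  show (qE φ i k * φ z') * φ z = _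
  rw [← K1q hJ hik hz', mul_assoc, K1q hJ hik hz]

lemma RP_vp (hJ : IsJordanHom φ) (hn : 2 ≤ n) {i j : Fin n}
    {u : Matrix (Fin n) (Fin n) S} (hu : MP S i j u) :
    RP φ i j (φ u * pg φ hn) := by
  by_cases hij : i = j
  · subst hij
    rw [(Cp_diag hJ hn hu).1]
    exact RP_mul (RP_diag hJ hu) (RP_p hJ i _)
  · rw [(Cp_off hJ hn hij hu).1]
    exact RP_A hJ i j u

lemma RP_vq (hJ : IsJordanHom φ) (hn : 2 ≤ n) {i j : Fin n}
    {u : Matrix (Fin n) (Fin n) S} (hu : MP S i j u) :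
    RP φ j i (φ u * qg φ hn) := by
  by_cases hij : i = j
  · subst hij
    rw [(Cq_diag hJ hn hu).1]
    exact RP_mul (RP_diag hJ hu) (RP_q hJ i _)
  · rw [(Cq_off hJ hn hij hu).1]
    exact RP_A hJ j i u

lemma CT0 (hJ : IsJordanHom φ) (hn : 2 ≤ n) {i j k l : Fin n} (hjk : j ≠ k)
    {u v : Matrix (Fin n) (Fin n) S} (hu : MP S i j u) (hv : MP S k l v) :
    φ u * (φ v * pg φ hn) = 0 := by
  have h1 : pg φ hn * (φ v * pg φ hn) = φ v * pg φ hn := by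
    rw [← mul_assoc, ← comm_all hJ hn v, mul_assoc, pg_idem hJ hn]
  calc φ u * (φ v * pg φ hn) = (φ u * pg φ hn) * (φ v * pg φ hn) := by
        rw [mul_assoc, h1]
    _ = 0 := RP_mul0 hJ (RP_vp hJ hn hu) (RP_vp hJ hn hv) hjk

lemma CT0q (hJ : IsJordanHom φ) (hn : 2 ≤ n) {i j k l : Fin n} (hjk : j ≠ k)
    {u v : Matrix (Fin n) (Fin n) S} (hu : MP S i j u) (hv : MP S k l v) :
    φ v * (φ u * qg φ hn) = 0 := by
  have h1 : qg φ hn * (φ u * qg φ hn) = φ u * qg φ hn := by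
    rw [← mul_assoc, ← comm_allq hJ hn u, mul_assoc, qg_idem hJ hn]
  calc φ v * (φ u * qg φ hn) = (φ v * qg φ hn) * (φ u * qg φ hn) := by
        rw [mul_assoc, h1]
    _ = 0 := RP_mul0 hJ (RP_vq hJ hn hv) (RP_vq hJ hn hu) (Ne.symm hjk)

lemma CP1 (hJ : IsJordanHom φ) (hn : 2 ≤ n) {i j l : Fin n}
    {u v : Matrix (Fin n) (Fin n) S} (hu : MP S i j u) (hv : MP S j l v) :
    φ (u * v) * pg φ hn = φ u * (φ v * pg φ hn) := by
  by_cases hij : i = j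
  · subst hij
    by_cases hil : i = l
    · subst hil
      rw [(Cp_diag hJ hn (MP_mul hu hv)).1, (Cp_diag hJ hn hv).1, K3 hJ (sig_ne hn i) hu hv]
    · rw [(Cp_off hJ hn hil (MP_mul hu hv)).1, (Cp_off hJ hn hil hv).1, (P3 hJ hil hu hv).1]
  · by_cases hjl : j = l
    · subst hjl
      rw [(Cp_off hJ hn hij (MP_mul hu hv)).1, (Cp_diag hJ hn hv).1,
        pE_welldef hJ (sig_ne hn j) (Ne.symm hij), phi_split hJ hij hu, add_mul,
        RP_mul0 hJ (RP_A hJ j i u) (RP_mul (RP_diag hJ hv) (RP_p hJ j i)) hij, add_zero,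
        ← mul_assoc, ← (P4 hJ hij hu hv).1, K2b' hJ hij _ (MP_mul hu hv)]
    · by_cases hil : i = l
      · subst hil
        rw [(Cp_diag hJ hn (MP_mul hu hv)).1, pE_welldef hJ (sig_ne hn i) hij,
          P2 hJ hij hu hv, add_mul, mul_assoc, mul_assoc, K2d hJ hij hu, mul_zero, add_zero,
          K2b' hJ (Ne.symm hij) v hv,
          (Cp_off hJ hn (Ne.symm hij) hv).1,
          phi_split hJ hij hu, add_mul,
          RP_mul0 hJ (RP_A hJ j i u) (RP_A hJ j i v) hij, add_zero]
      · rw [(Cp_off hJ hn hil (MP_mul hu hv)).1, (Cp_off hJ hn hjl hv).1,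
          (P1 hJ hij hjl hil hu hv).1, phi_split hJ hij hu, add_mul,
          RP_mul0 hJ (RP_A hJ j i u) (RP_A hJ j l v) hij, add_zero]

lemma CQ1 (hJ : IsJordanHom φ) (hn : 2 ≤ n) {i j l : Fin n}
    {u v : Matrix (Fin n) (Fin n) S} (hu : MP S i j u) (hv : MP S j l v) :
    φ (u * v) * qg φ hn = φ v * (φ u * qg φ hn) := by
  by_cases hij : i = j
  · subst hij
    by_cases hil : i = l
    · subst hil
      rw [(Cq_diag hJ hn (MP_mul hu hv)).1, (Cq_diag hJ hn hu).1, K3q hJ (sig_ne hn i) hu hv]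
    · rw [(Cq_off hJ hn hil (MP_mul hu hv)).1, (P3 hJ hil hu hv).2,
        (Cq_diag hJ hn hu).1, qE_welldef hJ (sig_ne hn i) hil,
        K1q hJ hil hu, ← mul_assoc,
        phi_split hJ hil hv, add_mul,
        RP_mul0 hJ (RP_A hJ i l v) (RP_q hJ i l) (Ne.symm hil), zero_add,
        K2d' hJ hil v hv]
  · by_cases hjl : j = l
    · subst hjl
      rw [(Cq_off hJ hn hij (MP_mul hu hv)).1, (P4 hJ hij hu hv).2, (Cq_off hJ hn hij hu).1]
    · by_cases hil : i = l
      · subst hil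
        rw [(Cq_diag hJ hn (MP_mul hu hv)).1, qE_welldef hJ (sig_ne hn i) hij,
          P2 hJ hij hu hv, add_mul, mul_assoc, mul_assoc, K2b hJ (Ne.symm hij) hv, mul_zero,
          zero_add, K2d' hJ hij u hu,
          (Cq_off hJ hn hij hu).1, phi_split hJ (Ne.symm hij) hv, add_mul,
          RP_mul0 hJ (RP_A hJ j i v) (RP_A hJ j i u) hij, zero_add]
      · rw [(Cq_off hJ hn hil (MP_mul hu hv)).1, (P1 hJ hij hjl hil hu hv).2,
          (Cq_off hJ hn hij hu).1, phi_split hJ hjl hv, add_mul,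
          RP_mul0 hJ (RP_A hJ j l v) (RP_A hJ j i u) (Ne.symm hjl), zero_add]

lemma ME_decompP (x : Matrix (Fin n) (Fin n) S) :
    x = ∑ p : Fin n × Fin n, ME S p.1 p.1 * x * ME S p.2 p.2 := by
  rw [Fintype.sum_prod_type]
  exact ME_decomp x

lemma T1 (hJ : IsJordanHom φ) (hn : 2 ≤ n) (x y : Matrix (Fin n) (Fin n) S) :
    φ (x * y) * pg φ hn = φ x * (φ y * pg φ hn) := by
  have hx := ME_decompP (S := S) x
  have hy := ME_decompP (S := S) y
  conv_lhs => rw [hx, hy]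
  conv_rhs => rw [hx, hy]
  simp only [Finset.sum_mul]
  simp only [Finset.mul_sum]
  simp only [phi_sum hJ.1]
  simp only [Finset.sum_mul]
  simp only [Finset.mul_sum]
  refine Finset.sum_congr rfl fun p _ => Finset.sum_congr rfl fun q _ => ?_
  by_cases hjk : p.2 = q.1
  · have hv : MP S p.2 q.2 (ME S q.1 q.1 * y * ME S q.2 q.2) := by
      rw [hjk]; exact MP_mk q.1 q.2 y
    exact CP1 hJ hn (MP_mk p.1 p.2 x) hv
  · rw [MP_mul0 (MP_mk p.1 p.2 x) (MP_mk q.1 q.2 y) hjk, phi_zero hJ.1, zero_mul]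
    exact (CT0 hJ hn hjk (MP_mk p.1 p.2 x) (MP_mk q.1 q.2 y)).symm

lemma T2 (hJ : IsJordanHom φ) (hn : 2 ≤ n) (x y : Matrix (Fin n) (Fin n) S) :
    φ (x * y) * qg φ hn = φ y * (φ x * qg φ hn) := by
  have hx := ME_decompP (S := S) x
  have hy := ME_decompP (S := S) y
  conv_lhs => rw [hx, hy]
  conv_rhs => rw [hx, hy]
  simp only [Finset.sum_mul]
  simp only [Finset.mul_sum]
  simp only [phi_sum hJ.1]
  simp only [Finset.sum_mul]
  simp only [Finset.mul_sum]
  conv_rhs => rw [Finset.sum_comm]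
  refine Finset.sum_congr rfl fun p _ => Finset.sum_congr rfl fun q _ => ?_
  by_cases hjk : p.2 = q.1
  · have hv : MP S p.2 q.2 (ME S q.1 q.1 * y * ME S q.2 q.2) := by
      rw [hjk]; exact MP_mk q.1 q.2 y
    exact CQ1 hJ hn (MP_mk p.1 p.2 x) hv
  · rw [MP_mul0 (MP_mk p.1 p.2 x) (MP_mk q.1 q.2 y) hjk, phi_zero hJ.1, zero_mul]
    exact (CT0q hJ hn hjk (MP_mk p.1 p.2 x) (MP_mk q.1 q.2 y)).symm

end core6


section final
variable {S : Type*} [Ring S] {n : ℕ} {R' : Type*} [NonUnitalRing R']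
variable {φ : Matrix (Fin n) (Fin n) S → R'}

lemma mem_rngGen (x : Matrix (Fin n) (Fin n) S) : φ x ∈ rngGen φ :=
  NonUnitalSubring.subset_closure ⟨x, rfl⟩

lemma pg_mem (hn : 2 ≤ n) : pg φ hn ∈ rngGen φ := by
  refine NonUnitalSubring.sum_mem _ fun i _ => ?_
  exact mul_mem (mul_mem (mul_mem (mem_rngGen _) (mem_rngGen _)) (mem_rngGen _))
    (mul_mem (mul_mem (mem_rngGen _) (mem_rngGen _)) (mem_rngGen _))

lemma qg_mem (hn : 2 ≤ n) : qg φ hn ∈ rngGen φ := by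
  refine NonUnitalSubring.sum_mem _ fun i _ => ?_
  exact mul_mem (mul_mem (mul_mem (mem_rngGen _) (mem_rngGen _)) (mem_rngGen _))
    (mul_mem (mul_mem (mem_rngGen _) (mem_rngGen _)) (mem_rngGen _))

lemma unit_gen (hJ : IsJordanHom φ) : ∀ w ∈ rngGen φ, w * φ 1 = w := by
  intro w hw
  induction hw using NonUnitalSubring.closure_induction with
  | mem x hx =>
    obtain ⟨y, rfl⟩ := hx
    exact unit_r hJ y
  | zero => rw [zero_mul]
  | add x y _ _ hx hy => rw [add_mul, hx, hy]
  | neg x _ hx => rw [neg_mul, hx]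
  | mul x y _ _ hx hy => rw [mul_assoc, hy]

lemma qg_central (hJ : IsJordanHom φ) (hn : 2 ≤ n) :
    ∀ w ∈ rngGen φ, w * qg φ hn = qg φ hn * w := by
  intro w hw
  induction hw using NonUnitalSubring.closure_induction with
  | mem x hx =>
    obtain ⟨y, rfl⟩ := hx
    exact comm_allq hJ hn y
  | zero => rw [zero_mul, mul_zero]
  | add x y _ _ hx hy => rw [add_mul, mul_add, hx, hy]
  | neg x _ hx => rw [neg_mul, mul_neg, hx]
  | mul x y _ _ hx hy => rw [mul_assoc, hy, ← mul_assoc, hx, mul_assoc]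

lemma pg_central (hJ : IsJordanHom φ) (hn : 2 ≤ n) :
    ∀ w ∈ rngGen φ, w * pg φ hn = pg φ hn * w := by
  intro w hw
  induction hw using NonUnitalSubring.closure_induction with
  | mem x hx =>
    obtain ⟨y, rfl⟩ := hx
    exact comm_all hJ hn y
  | zero => rw [zero_mul, mul_zero]
  | add x y _ _ hx hy => rw [add_mul, mul_add, hx, hy]
  | neg x _ hx => rw [neg_mul, mul_neg, hx]
  | mul x y _ _ hx hy => rw [mul_assoc, hy, ← mul_assoc, hx, mul_assoc]

/-- the ideal of elements annihilated (on the right) by multiplication with `c`. -/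
def Jideal (hJ : IsJordanHom φ) (hn : 2 ≤ n) (c : R')
    (hc : ∀ w ∈ rngGen φ, w * c = c * w) : TwoSidedIdeal (rngGen φ) :=
  TwoSidedIdeal.mk' {w : rngGen φ | (w : R') * c = 0}
    (by show (0 : R') * c = 0; rw [zero_mul])
    (by intro x y hx hy
        show ((x : R') + y) * c = 0
        rw [add_mul, hx, hy, add_zero])
    (by intro x hx
        show (-(x : R')) * c = 0
        rw [neg_mul, hx, neg_zero])
    (by intro x y hy
        show ((x : R') * y) * c = 0
        rw [mul_assoc, hy, mul_zero])
    (by intro x y hx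
        show ((x : R') * y) * c = 0
        rw [mul_assoc, hc y y.2, ← mul_assoc, hx, zero_mul])

lemma mem_Jideal (hJ : IsJordanHom φ) (hn : 2 ≤ n) (c : R')
    (hc : ∀ w ∈ rngGen φ, w * c = c * w) (w : rngGen φ) :
    w ∈ Jideal hJ hn c hc ↔ (w : R') * c = 0 :=
  TwoSidedIdeal.mem_mk' _ _ _ _ _ _ w

lemma pg_absorb (hJ : IsJordanHom φ) (hn : 2 ≤ n) (v : Matrix (Fin n) (Fin n) S) :
    pg φ hn * (φ v * pg φ hn) = φ v * pg φ hn := by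
  rw [← mul_assoc, ← comm_all hJ hn v, mul_assoc, pg_idem hJ hn]

lemma qg_absorb (hJ : IsJordanHom φ) (hn : 2 ≤ n) (v : Matrix (Fin n) (Fin n) S) :
    qg φ hn * (φ v * qg φ hn) = φ v * qg φ hn := by
  rw [← mul_assoc, ← comm_allq hJ hn v, mul_assoc, qg_idem hJ hn]

end final

end JRaux


open JRaux in
theorem matrix_jordanHom_sum {S : Type*} [Ring S] {n : ℕ} (hn : 2 ≤ n)
    {R' : Type*} [NonUnitalRing R']
    (φ : Matrix (Fin n) (Fin n) S → R') (hφ : IsJordanHom φ) :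
    IsSumHomAntihomOn φ (⊤ : TwoSidedIdeal (Matrix (Fin n) (Fin n) S)) ∧ Splittable φ := by
  have hJ := hφ
  set P := pg φ hn with hP
  set Q := qg φ hn with hQ
  -- the two complementary ideals
  have hcp : ∀ w ∈ rngGen φ, w * P = P * w := pg_central hJ hn
  have hcq : ∀ w ∈ rngGen φ, w * Q = Q * w := qg_central hJ hn
  set J₁ : TwoSidedIdeal (rngGen φ) := Jideal hJ hn Q hcq with hJ1
  set J₂ : TwoSidedIdeal (rngGen φ) := Jideal hJ hn P hcp with hJ2
  have hmemJ1 : ∀ w : rngGen φ, w ∈ J₁ ↔ (w : R') * Q = 0 := mem_Jideal hJ hn Q hcq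
  have hmemJ2 : ∀ w : rngGen φ, w ∈ J₂ ↔ (w : R') * P = 0 := mem_Jideal hJ hn P hcp
  have hbot : J₁ ⊓ J₂ = ⊥ := by
    rw [eq_bot_iff]
    intro w hw
    rw [TwoSidedIdeal.mem_inf, hmemJ1, hmemJ2] at hw
    rw [TwoSidedIdeal.mem_bot]
    have h0 : (w : R') = 0 := by
      have := unit_gen hJ w.1 w.2
      rw [← Gsum hJ hn, mul_add, hw.2, hw.1, add_zero] at this
      exact this.symm
    exact Subtype.ext h0
  -- the two maps
  set φ₁ : Matrix (Fin n) (Fin n) S → rngGen φ :=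
    fun x => ⟨φ x * P, mul_mem (mem_rngGen x) (pg_mem hn)⟩ with hphi1
  set φ₂ : Matrix (Fin n) (Fin n) S → rngGen φ :=
    fun x => ⟨φ x * Q, mul_mem (mem_rngGen x) (qg_mem hn)⟩ with hphi2
  constructor
  · refine ⟨φ₁, φ₂, ?_, ?_, ?_, ?_, ?_, ⟨J₁, J₂, ?_, ?_, hbot⟩, ?_, ?_⟩
    · intro u _ v _
      exact Subtype.ext (by show φ (u + v) * P = φ u * P + φ v * P; rw [hJ.1, add_mul])
    · intro u _ v _
      exact Subtype.ext (by show φ (u + v) * Q = φ u * Q + φ v * Q; rw [hJ.1, add_mul])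
    · intro u _ v _
      refine Subtype.ext ?_
      show φ (u * v) * P = (φ u * P) * (φ v * P)
      rw [mul_assoc, pg_absorb hJ hn, T1 hJ hn]
    · intro u _ v _
      refine Subtype.ext ?_
      show φ (u * v) * Q = (φ v * Q) * (φ u * Q)
      rw [mul_assoc, qg_absorb hJ hn, T2 hJ hn]
    · intro u _
      show φ u = φ u * P + φ u * Q
      rw [← mul_add, Gsum hJ hn, unit_gen hJ _ (mem_rngGen u)]
    · intro u _
      rw [hmemJ1]
      show (φ u * P) * Q = 0
      rw [mul_assoc, pg_qg hJ hn, mul_zero]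
    · intro u _
      rw [hmemJ2]
      show (φ u * Q) * P = 0
      rw [mul_assoc, qg_pg hJ hn, mul_zero]
    · intro u _ x
      constructor
      · show φ (u * x) * P = (φ u * P) * φ x
        rw [T1 hJ hn, mul_assoc, ← comm_all hJ hn x, ← mul_assoc]
      · show φ (x * u) * P = φ x * (φ u * P)
        rw [T1 hJ hn]
    · intro u _ x
      constructor
      · show φ (u * x) * Q = φ x * (φ u * Q)
        rw [T2 hJ hn]
      · show φ (x * u) * Q = (φ u * Q) * φ x
        rw [T2 hJ hn, mul_assoc, ← comm_allq hJ hn x, ← mul_assoc]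
  · -- splittable
    have hV : Vphi φ ≤ J₂ := by
      intro w hw
      refine TwoSidedIdeal.mem_span_iff.1 hw J₂ ?_
      rintro a ⟨x, y, hxy⟩
      rw [SetLike.mem_coe, hmemJ2, hxy, sub_mul, T1 hJ hn, mul_assoc, sub_self]
    have hW : Wphi φ ≤ J₁ := by
      intro w hw
      refine TwoSidedIdeal.mem_span_iff.1 hw J₁ ?_
      rintro a ⟨x, y, hxy⟩
      rw [SetLike.mem_coe, hmemJ1, hxy, sub_mul, T2 hJ hn, mul_assoc, sub_self]
    rw [Splittable, eq_bot_iff, ← hbot]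
    intro w hw
    rw [TwoSidedIdeal.mem_inf] at hw ⊢
    exact ⟨hW hw.2, hV hw.1⟩
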